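/- If a finite game is both a potential game (admits exact potential F) and a harmonic game (satisfies Σ_{i∈N} Σ_{a_i' ∈ A_i} (J_i(a_i, a_{-i}) − J_i(a_i', a_{-i})) = 0 for every strategy profile), and moreover the game is harmonic and nonzero-strategic only trivially, then the game is nonstrategic: every player's cost is independent of its own strategy. Equivalently, the intersection of the set of potential games and the set of harmonic games (sharing N and A) is exactly the set of nonstrategic games. -/
import Mathlib


/-- a finite game is both a potential game and a harmonic game
iff it is nonstrategic. -/
theorem potential_inter_harmonic_eq_nonstrategic
    {N : Type} [Fintype N] [DecidableEq N]
    (A : N → Type) [∀ i, Fintype (A i)]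
    (J : N → (∀ i, A i) → ℝ) :
    ((∃ F : (∀ i, A i) → ℝ,
        ∀ (i : N) (a : ∀ i, A i) (a' : A i),
          J i a - J i (Function.update a i a') = F a - F (Function.update a i a')) ∧
     (∀ a : ∀ i, A i,
        ∑ i : N, ∑ b : A i, (J i a - J i (Function.update a i b)) = 0)) ↔
    (∀ (i : N) (a : ∀ i, A i) (b : A i), J i a = J i (Function.update a i b)) := by
  classical
  constructor
  · rintro ⟨⟨F, hF⟩, hH⟩
    intro i a b
    have hne : Nonempty (∀ i, A i) := ⟨a⟩
    obtain ⟨a0, ha0⟩ := Finite.exists_max F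
    have hHF : ∀ a : ∀ i, A i,
        ∑ i : N, ∑ b : A i, (F a - F (Function.update a i b)) = 0 := by
      intro a
      rw [← hH a]
      exact Finset.sum_congr rfl fun i _ =>
        Finset.sum_congr rfl fun b _ => (hF i a b).symm
    have step : ∀ a : ∀ i, A i, (∀ x, F x ≤ F a) →
        ∀ (i : N) (b : A i), F (Function.update a i b) = F a := by
      intro a hmax i b
      have h1 : ∀ j ∈ Finset.univ,
          (0:ℝ) ≤ ∑ c : A j, (F a - F (Function.update a j c)) := by
        intro j _
        exact Finset.sum_nonneg fun c _ => by
          linarith [hmax (Function.update a j c)]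
      have h2 := (Finset.sum_eq_zero_iff_of_nonneg h1).mp (hHF a) i (Finset.mem_univ i)
      have h3 : ∀ c ∈ Finset.univ, (0:ℝ) ≤ F a - F (Function.update a i c) :=
        fun c _ => by linarith [hmax (Function.update a i c)]
      have h4 := (Finset.sum_eq_zero_iff_of_nonneg h3).mp h2 b (Finset.mem_univ b)
      linarith
    have hall : ∀ a : ∀ i, A i, F a = F a0 ∧ (∀ x, F x ≤ F a) := by
      intro a
      have main : ∀ s : Finset N,
          F (fun i => if i ∈ s then a i else a0 i) = F a0 ∧
          (∀ x, F x ≤ F (fun i => if i ∈ s then a i else a0 i)) := by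
        intro s
        induction s using Finset.induction with
        | empty =>
          exact ⟨by simp, by simpa using ha0⟩
        | @insert j s hj ih =>
          have heq : (fun i => if i ∈ insert j s then a i else a0 i) =
              Function.update (fun i => if i ∈ s then a i else a0 i) j (a j) := by
            funext i
            by_cases hij : i = j
            · subst hij; simp [Function.update]
            · simp [Function.update, hij, Finset.mem_insert]
          rw [heq, step _ ih.2 j (a j)]
          exact ih
      have := main Finset.univ
      simpa using this
    have hFa : F a = F (Function.update a i b) := by
      rw [(hall a).1, (hall (Function.update a i b)).1]
    have := hF i a b
    rw [hFa] at this
    linarith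
  · intro h
    refine ⟨⟨fun _ => 0, fun i a a' => by rw [← h i a a']; ring⟩, ?_⟩
    intro a
    refine Finset.sum_eq_zero fun i _ => Finset.sum_eq_zero fun b _ => by
      rw [← h i a b]; ring
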